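/- Let E be a real inner product space and let h₁, h₂, Δ₁, Δ₂ ∈ E be nonzero vectors with ‖Δ₁‖ = ‖Δ₂‖ = C, angle(h₁, Δ₁) = angle(h₂, Δ₂) = φ ∈ (0, π), ‖h₁‖ > ‖h₂‖ > 0, and ‖h₂‖ + C·cos(φ) > 0. Then angle(h₁, h₁ + Δ₁) < angle(h₂, h₂ + Δ₂): the higher-norm state rotates by a strictly smaller angle under its residual update. -/

import Mathlib

open InnerProductGeometry

private lemma ratio_mono {s t₁ t₂ : ℝ} (hs : 0 < s) (h2 : 0 < t₂) (h12 : t₂ < t₁) :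
    t₂ / Real.sqrt (t₂ ^ 2 + s ^ 2) < t₁ / Real.sqrt (t₁ ^ 2 + s ^ 2) := by
  have hb : (0:ℝ) < Real.sqrt (t₂ ^ 2 + s ^ 2) := Real.sqrt_pos.2 (by positivity)
  have ha : (0:ℝ) < Real.sqrt (t₁ ^ 2 + s ^ 2) := Real.sqrt_pos.2 (by positivity)
  have hb2 : Real.sqrt (t₂ ^ 2 + s ^ 2) ^ 2 = t₂ ^ 2 + s ^ 2 := Real.sq_sqrt (by positivity)
  have ha2 : Real.sqrt (t₁ ^ 2 + s ^ 2) ^ 2 = t₁ ^ 2 + s ^ 2 := Real.sq_sqrt (by positivity)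
  rw [div_lt_div_iff₀ hb ha]
  have hsq : (t₂ * Real.sqrt (t₁ ^ 2 + s ^ 2)) ^ 2 < (t₁ * Real.sqrt (t₂ ^ 2 + s ^ 2)) ^ 2 := by
    rw [mul_pow, mul_pow, ha2, hb2]
    have ht : t₂ ^ 2 < t₁ ^ 2 := by nlinarith
    nlinarith [mul_pos hs hs]
  exact lt_of_pow_lt_pow_left₀ 2 (mul_pos (h2.trans h12) hb).le hsq

private lemma cos_angle_add_eq {E : Type*} [NormedAddCommGroup E] [InnerProductSpace ℝ E]
    (h Δ : E) (C φ : ℝ) (hh : h ≠ 0) (hΔ : Δ ≠ 0) (hC : ‖Δ‖ = C) (hφ : angle h Δ = φ) :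
    Real.cos (angle h (h + Δ)) =
      (‖h‖ + C * Real.cos φ) /
        Real.sqrt ((‖h‖ + C * Real.cos φ) ^ 2 + (C * Real.sin φ) ^ 2) := by
  have hr : (0:ℝ) < ‖h‖ := norm_pos_iff.2 hh
  have hCpos : (0:ℝ) < C := hC ▸ norm_pos_iff.2 hΔ
  have hinner : (inner ℝ h Δ : ℝ) = ‖h‖ * C * Real.cos φ := by
    have := InnerProductGeometry.cos_angle h Δ
    rw [hφ, hC] at this
    field_simp at this
    linarith [this]
  have hsq : ‖h + Δ‖ ^ 2 = (‖h‖ + C * Real.cos φ) ^ 2 + (C * Real.sin φ) ^ 2 := by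
    rw [norm_add_sq_real, hinner, hC]
    have := Real.sin_sq_add_cos_sq φ
    ring_nf
    nlinarith [this]
  have hnorm : ‖h + Δ‖ = Real.sqrt ((‖h‖ + C * Real.cos φ) ^ 2 + (C * Real.sin φ) ^ 2) := by
    rw [← hsq, Real.sqrt_sq (norm_nonneg _)]
  have hinner2 : (inner ℝ h (h + Δ) : ℝ) = ‖h‖ * (‖h‖ + C * Real.cos φ) := by
    rw [inner_add_right, hinner, real_inner_self_eq_norm_sq]; ring
  rw [InnerProductGeometry.cos_angle, hinner2, hnorm]
  rw [mul_div_mul_left _ _ (ne_of_gt hr)]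

/-- Representational inertia: under residual updates of equal magnitude `C` forming
equal angles `φ` with their hidden states, the higher-norm state rotates strictly less. -/
theorem angle_update_lt_of_norm_gt {E : Type*} [NormedAddCommGroup E] [InnerProductSpace ℝ E]
    (h₁ h₂ Δ₁ Δ₂ : E) (C φ : ℝ)
    (hh₁ : h₁ ≠ 0) (hh₂ : h₂ ≠ 0) (hΔ₁ : Δ₁ ≠ 0) (hΔ₂ : Δ₂ ≠ 0)
    (hC₁ : ‖Δ₁‖ = C) (hC₂ : ‖Δ₂‖ = C)
    (hφ₁ : angle h₁ Δ₁ = φ) (hφ₂ : angle h₂ Δ₂ = φ)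
    (hφ0 : 0 < φ) (hφπ : φ < Real.pi)
    (hn : ‖h₁‖ > ‖h₂‖) (hn₂ : ‖h₂‖ > 0)
    (hpos : ‖h₂‖ + C * Real.cos φ > 0) :
    angle h₁ (h₁ + Δ₁) < angle h₂ (h₂ + Δ₂) := by
  have hCpos : (0:ℝ) < C := hC₁ ▸ norm_pos_iff.2 hΔ₁
  have hs : (0:ℝ) < C * Real.sin φ := mul_pos hCpos (Real.sin_pos_of_pos_of_lt_pi hφ0 hφπ)
  set t₂ := ‖h₂‖ + C * Real.cos φ with ht₂
  set t₁ := ‖h₁‖ + C * Real.cos φ with ht₁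
  have h12 : t₂ < t₁ := by simp only [ht₁, ht₂]; linarith
  have key : Real.cos (angle h₂ (h₂ + Δ₂)) < Real.cos (angle h₁ (h₁ + Δ₁)) := by
    rw [cos_angle_add_eq h₁ Δ₁ C φ hh₁ hΔ₁ hC₁ hφ₁, cos_angle_add_eq h₂ Δ₂ C φ hh₂ hΔ₂ hC₂ hφ₂]
    exact ratio_mono hs hpos h12
  have e₁ := Real.arccos_cos (angle_nonneg h₁ (h₁ + Δ₁)) (angle_le_pi h₁ (h₁ + Δ₁))
  have e₂ := Real.arccos_cos (angle_nonneg h₂ (h₂ + Δ₂)) (angle_le_pi h₂ (h₂ + Δ₂))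
  calc angle h₁ (h₁ + Δ₁) = Real.arccos (Real.cos (angle h₁ (h₁ + Δ₁))) := e₁.symm
    _ < Real.arccos (Real.cos (angle h₂ (h₂ + Δ₂))) := by
        apply Real.strictAntiOn_arccos ⟨Real.neg_one_le_cos _, Real.cos_le_one _⟩
          ⟨Real.neg_one_le_cos _, Real.cos_le_one _⟩ key
    _ = angle h₂ (h₂ + Δ₂) := e₂
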